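/- Let H be a real inner product space, let α ≥ 0, β > 0, and ε > 0 be reals, let F : H → H satisfy ⟪v, F(v)⟫ ≤ α − β‖v‖² for all v ∈ H, and let u : [0,∞) → H be differentiable with u'(t) = F(u(t)) for all t ≥ 0. If ‖u(0)‖² ≤ α/β + ε, then ‖u(t)‖² ≤ α/β + ε for all t ≥ 0. -/

import Mathlib

open RealInnerProductSpace

/-- Positive invariance of the absorbing ball `{v : ‖v‖² ≤ α/β + ε}` for systems
satisfying the paper's dissipativity inequality `⟪u, F u⟫ ≤ α - β ‖u‖²`. -/
theorem stmt_4
    {H : Type*} [NormedAddCommGroup H] [InnerProductSpace ℝ H]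
    (α β ε : ℝ) (hα : 0 ≤ α) (hβ : 0 < β) (hε : 0 < ε)
    (F : H → H)
    (hF : ∀ v : H, ⟪v, F v⟫ ≤ α - β * ‖v‖ ^ 2)
    (u : ℝ → H)
    (hu : ∀ t : ℝ, 0 ≤ t → HasDerivWithinAt u (F (u t)) (Set.Ici 0) t)
    (h0 : ‖u 0‖ ^ 2 ≤ α / β + ε) :
    ∀ t : ℝ, 0 ≤ t → ‖u t‖ ^ 2 ≤ α / β + ε := by
  intro T hT
  set g : ℝ → ℝ := fun s => ⟪u s, u s⟫ with hg
  have hgnorm : ∀ s, g s = ‖u s‖ ^ 2 := fun s => real_inner_self_eq_norm_sq _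
  set δ : ℝ := α / β + ε with hδ
  have hg' : ∀ x ∈ Set.Ico (0:ℝ) T,
      HasDerivWithinAt g (2 * ⟪u x, F (u x)⟫) (Set.Ici x) x := by
    intro x hx
    have h1 : HasDerivWithinAt u (F (u x)) (Set.Ici x) x :=
      ((hu x hx.1).mono (Set.Ici_subset_Ici.2 hx.1))
    have := h1.inner ℝ h1
    have h2 : (2 * ⟪u x, F (u x)⟫) = ⟪u x, F (u x)⟫ + ⟪F (u x), u x⟫ := by
      rw [real_inner_comm (u x) (F (u x))]; ring
    rw [h2]; exact this
  have hcont : ContinuousOn g (Set.Icc 0 T) := by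
    intro x hx
    have h1 : ContinuousWithinAt u (Set.Icc 0 T) x :=
      ((hu x hx.1).continuousWithinAt).mono Set.Icc_subset_Ici_self
    exact h1.inner h1
  have key := le_gronwallBound_of_liminf_deriv_right_le
    (f := g) (f' := fun x => 2 * ⟪u x, F (u x)⟫) (δ := δ) (K := -(2*β)) (ε := 2*α)
    (a := 0) (b := T)
    hcont
    (fun x hx r hr => (hg' x hx).liminf_right_slope_le hr)
    (by rw [hgnorm]; exact h0)
    (by
      intro x hx
      have := hF (u x)
      show 2 * ⟪u x, F (u x)⟫ ≤ -(2*β) * g x + 2*α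
      rw [hgnorm]
      nlinarith)
  have hb := key T ⟨hT, le_refl T⟩
  rw [hgnorm] at hb
  refine hb.trans ?_
  rw [sub_zero, gronwallBound_of_K_ne_0 (by nlinarith : -(2*β) ≠ 0)]
  show δ * Real.exp (-(2*β) * T) + 2*α / -(2*β) * (Real.exp (-(2*β) * T) - 1) ≤ δ
  have hexp : Real.exp (-(2*β) * T) ≤ 1 := by
    apply Real.exp_le_one_iff.2; nlinarith
  have hexp0 : 0 < Real.exp (-(2*β) * T) := Real.exp_pos _
  have hαβ : α / β ≤ δ := by simp [hδ]; linarith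
  have heq : 2*α / -(2*β) * (Real.exp (-(2*β) * T) - 1) = (α/β) * (1 - Real.exp (-(2*β)*T)) := by
    field_simp; ring
  rw [heq]
  nlinarith [mul_le_mul_of_nonneg_right hαβ (by linarith : (0:ℝ) ≤ 1 - Real.exp (-(2*β)*T))]
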